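/- If the ALCQI concept C_dom ⊓ 𝕋(C) is satisfiable, then the ALCQP(p,s) concept C is satisfiable. -/

import Mathlib

/-! ALCQP(p,s) and its reification translation 𝕋 into ALCQI. -/

/-- The two permutation operators: cyclic shift `p` and swap `s`. -/
inductive PS : Type
  | p : PS
  | s : PS

/-- The permutation of `Fin (n+2)` associated with an operator: for `p`, tuples of `p(R)`
are `t ∘ ρ` where `ρ 0 = n+1` (last coordinate moved to the front); for `s`, the
transposition of the last two coordinates. -/
def permOfOp (n : ℕ) : PS → Equiv.Perm (Fin (n + 2))
  | .p => (finRotate (n + 2)).symm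
  | .s => Equiv.swap (Fin.castSucc (Fin.last n)) (Fin.last (n + 1))

/-- Action of one operator on an `(n+2)`-ary relation. -/
def applyOp {A : Type*} (n : ℕ) (o : PS) (R : Set (Fin (n + 2) → A)) :
    Set (Fin (n + 2) → A) :=
  (fun t => t ∘ ⇑(permOfOp n o)) '' R

/-- Action of a permutation string (word over `{p,s}`) on an `(n+2)`-ary relation. -/
def applyString {A : Type*} (n : ℕ) : List PS → Set (Fin (n + 2) → A) → Set (Fin (n + 2) → A)
  | [], R => R
  | o :: rest, R => applyString n rest (applyOp n o R)

/-- The permutation associated with a permutation string `π`: `permOfString n π i` is the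
source coordinate of `R` sent to position `i` of `R^π`. -/
def permOfString (n : ℕ) : List PS → Equiv.Perm (Fin (n + 2))
  | [] => 1
  | o :: rest => (permOfString n rest).trans (permOfOp n o)

/-- ALCQP(p,s) concepts: a role `R` has arity `ar R + 2` and may be modified by a
permutation string `π`; `atLeast k R π cs` is `≥k R^π.(C₂,…,Cₙ)` with `n = ar R + 2`. -/
inductive ALCQP (Cn Rn : Type) (ar : Rn → ℕ) : Type
  | top : ALCQP Cn Rn ar
  | bot : ALCQP Cn Rn ar
  | atom (A : Cn) : ALCQP Cn Rn ar
  | neg (C : ALCQP Cn Rn ar) : ALCQP Cn Rn ar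
  | inter (C D : ALCQP Cn Rn ar) : ALCQP Cn Rn ar
  | atLeast (k : ℕ) (R : Rn) (π : List PS) (cs : Fin (ar R + 1) → ALCQP Cn Rn ar) :
      ALCQP Cn Rn ar

/-- An interpretation with polyadic roles of arity `ar R + 2`. -/
structure PInterp (Cn Rn : Type) (ar : Rn → ℕ) : Type 1 where
  Dom : Type
  cInt : Cn → Set Dom
  rInt : (R : Rn) → Set (Fin (ar R + 2) → Dom)

/-- Semantics of ALCQP(p,s): `u ∈ (≥k R^π.(C₂,…,Cₙ))^I` iff there are at least `k`
tuples `(u, v₂, …, vₙ) ∈ (R^π)^I` with `vᵢ ∈ Cᵢ^I` for each `i`. -/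
def qpsem {Cn Rn : Type} {ar : Rn → ℕ} (I : PInterp Cn Rn ar) :
    ALCQP Cn Rn ar → Set I.Dom
  | .top => Set.univ
  | .bot => ∅
  | .atom A => I.cInt A
  | .neg C => (qpsem I C)ᶜ
  | .inter C D => qpsem I C ∩ qpsem I D
  | .atLeast k R π cs =>
      { u | ∃ f : Fin k → (Fin (ar R + 2) → I.Dom), Function.Injective f ∧
          ∀ j, f j ∈ applyString (ar R) π (I.rInt R) ∧ f j 0 = u ∧
            ∀ i : Fin (ar R + 1), f j i.succ ∈ qpsem I (cs i) }

/-- ALCQI concepts (with qualified number restrictions and inverse roles). -/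
inductive ALCQI (Cn Rn : Type) : Type
  | top : ALCQI Cn Rn
  | bot : ALCQI Cn Rn
  | atom (A : Cn) : ALCQI Cn Rn
  | neg (C : ALCQI Cn Rn) : ALCQI Cn Rn
  | inter (C D : ALCQI Cn Rn) : ALCQI Cn Rn
  | atLeast (k : ℕ) (R : Rn) (inv : Bool) (C : ALCQI Cn Rn) : ALCQI Cn Rn

/-- Binary interpretations for ALCQI. -/
structure Interp (Cn Rn : Type) : Type 1 where
  Dom : Type
  cInt : Cn → Set Dom
  rInt : Rn → Set (Dom × Dom)

/-- Semantics of ALCQI. -/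
def qsem {Cn Rn : Type} (I : Interp Cn Rn) : ALCQI Cn Rn → Set I.Dom
  | .top => Set.univ
  | .bot => ∅
  | .atom A => I.cInt A
  | .neg C => (qsem I C)ᶜ
  | .inter C D => qsem I C ∩ qsem I D
  | .atLeast k R b C =>
      { u | ∃ f : Fin k → I.Dom, Function.Injective f ∧
          ∀ i, (if b then ((f i, u) ∈ I.rInt R) else ((u, f i) ∈ I.rInt R)) ∧
            f i ∈ qsem I C }

/-- Target concept names of the translation: old concept names, the fresh `C_dom`,
and a fresh `L_R` for each role name `R`. -/
abbrev TCn (Cn Rn : Type) : Type := Cn ⊕ (Unit ⊕ Rn)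

/-- The fresh concept `C_dom`. -/
def cdom {Cn Rn : Type} : ALCQI (TCn Cn Rn) ℕ := .atom (.inr (.inl ()))

/-- The fresh concept `L_R`. -/
def lR {Cn Rn : Type} (R : Rn) : ALCQI (TCn Cn Rn) ℕ := .atom (.inr (.inr R))

/-- Finite conjunction. -/
def bigAnd {Cn Rn : Type} : List (ALCQI Cn Rn) → ALCQI Cn Rn
  | [] => .top
  | c :: cs => .inter c (bigAnd cs)

/-- `∃F.C` as `≥1 F.C`. -/
def exI {Cn Rn : Type} (F : Rn) (C : ALCQI Cn Rn) : ALCQI Cn Rn := .atLeast 1 F false C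

/-- `∀F.C` as `¬ ≥1 F.(¬C)`. -/
def allI {Cn Rn : Type} (F : Rn) (C : ALCQI Cn Rn) : ALCQI Cn Rn :=
  .neg (.atLeast 1 F false (.neg C))

/-- `=1 F.⊤`: the out-degree of `F` is exactly one. -/
def eqOneTop {Cn Rn : Type} (F : Rn) : ALCQI Cn Rn :=
  .inter (.atLeast 1 F false .top) (.neg (.atLeast 2 F false .top))

/-- `χ_R`: `L_R` holds and every other `L_S` fails. -/
noncomputable def chi {Cn Rn : Type} [Fintype Rn] [DecidableEq Rn] (R : Rn) : ALCQI (TCn Cn Rn) ℕ :=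
  .inter (lR R) (bigAnd (((Finset.univ.erase R).toList).map fun S => .neg (lR S)))

/-- `Outdeg_n`: each `F_i` (for `i < n`) has out-degree exactly one with range in `C_dom`. -/
def outdeg {Cn Rn : Type} (n : ℕ) : ALCQI (TCn Cn Rn) ℕ :=
  bigAnd ((List.range n).map fun i => .inter (eqOneTop i) (allI i cdom))

/-- The reification translation `𝕋` from ALCQP(p,s) into ALCQI: homomorphic on Booleans,
and `𝕋(≥k R^π.(C₂,…,Cₙ)) = ≥k F_{π₁}⁻¹.(¬C_dom ⊓ χ_R ⊓ Outdeg_n ⊓ ∃F_{π₂}.𝕋(C₂) ⊓ … ⊓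
∃F_{πₙ}.𝕋(Cₙ))`, where `πᵢ` is the source coordinate of `R` sent to position `i` by `π`. -/
noncomputable def reify {Cn Rn : Type} [Fintype Rn] [DecidableEq Rn] {ar : Rn → ℕ} :
    ALCQP Cn Rn ar → ALCQI (TCn Cn Rn) ℕ
  | .top => .top
  | .bot => .bot
  | .atom A => .atom (.inl A)
  | .neg C => .neg (reify C)
  | .inter C D => .inter (reify C) (reify D)
  | .atLeast k R π cs =>
      .atLeast k ((permOfString (ar R) π 0 : Fin (ar R + 2)).val) true
        (bigAnd ((.neg cdom) :: chi R :: outdeg (ar R + 2) ::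
          List.ofFn fun i : Fin (ar R + 1) =>
            exI ((permOfString (ar R) π i.succ : Fin (ar R + 2)).val) (reify (cs i))))

/-- Concept satisfiability for ALCQP(p,s). -/
def satQP {Cn Rn : Type} {ar : Rn → ℕ} (C : ALCQP Cn Rn ar) : Prop :=
  ∃ (I : PInterp Cn Rn ar) (u : I.Dom), u ∈ qpsem I C

/-- Concept satisfiability for ALCQI. -/
def satQI {Cn Rn : Type} (C : ALCQI Cn Rn) : Prop :=
  ∃ (I : Interp Cn Rn) (u : I.Dom), u ∈ qsem I C


/-! ### Helper lemmas about ALCQI semantics -/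

theorem qsem_bigAnd {Cn Rn : Type} (I : Interp Cn Rn) (L : List (ALCQI Cn Rn)) (x : I.Dom) :
    x ∈ qsem I (bigAnd L) ↔ ∀ c ∈ L, x ∈ qsem I c := by
  induction L with
  | nil => simp [bigAnd, qsem]
  | cons c cs ih =>
    simp only [bigAnd, qsem, Set.mem_inter_iff, ih, List.mem_cons]
    constructor
    · rintro ⟨h1, h2⟩ d (rfl | hd)
      · exact h1
      · exact h2 d hd
    · intro h; exact ⟨h c (Or.inl rfl), fun d hd => h d (Or.inr hd)⟩

theorem qsem_ex {Cn Rn : Type} (I : Interp Cn Rn) (F : Rn) (D : ALCQI Cn Rn) (x : I.Dom) :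
    x ∈ qsem I (.atLeast 1 F false D) ↔ ∃ w, (x, w) ∈ I.rInt F ∧ w ∈ qsem I D := by
  constructor
  · rintro ⟨f, -, hf⟩
    refine ⟨f 0, ?_, (hf 0).2⟩
    have := (hf 0).1
    simpa using this
  · rintro ⟨w, h1, h2⟩
    exact ⟨fun _ => w, Function.injective_of_subsingleton _, fun i => ⟨by simpa using h1, h2⟩⟩

theorem qsem_exI {Cn Rn : Type} (I : Interp Cn Rn) (F : Rn) (D : ALCQI Cn Rn) (x : I.Dom) :
    x ∈ qsem I (exI F D) ↔ ∃ w, (x, w) ∈ I.rInt F ∧ w ∈ qsem I D :=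
  qsem_ex I F D x

theorem qsem_allI {Cn Rn : Type} (I : Interp Cn Rn) (F : Rn) (D : ALCQI Cn Rn) (x : I.Dom) :
    x ∈ qsem I (allI F D) ↔ ∀ w, (x, w) ∈ I.rInt F → w ∈ qsem I D := by
  show x ∉ qsem I (.atLeast 1 F false (.neg D)) ↔ _
  rw [qsem_ex]
  push_neg
  constructor
  · intro h w hw
    by_contra hc
    exact (h w hw) hc
  · intro h w hw
    exact not_not_intro (h w hw)

theorem qsem_eqOneTop {Cn Rn : Type} (I : Interp Cn Rn) (F : Rn) (x : I.Dom) :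
    x ∈ qsem I (eqOneTop F) ↔ ∃! w, (x, w) ∈ I.rInt F := by
  have hpair : ∀ w w' : I.Dom, (x, w) ∈ I.rInt F → (x, w') ∈ I.rInt F → w ≠ w' →
      x ∈ qsem I (.atLeast 2 F false .top) := by
    intro w w' hw hw' hne
    refine ⟨fun i => if i.val = 0 then w else w', ?_, ?_⟩
    · intro a b hab
      fin_cases a <;> fin_cases b <;> simp_all
    · intro i
      refine ⟨?_, trivial⟩
      by_cases hi : i.val = 0 <;> simp [hi, hw, hw']
  constructor
  · rintro ⟨h1, h2⟩
    obtain ⟨w, hw, -⟩ := (qsem_ex I F .top x).1 h1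
    refine ⟨w, hw, ?_⟩
    intro w' hw'
    by_contra hne
    exact h2 (hpair w' w hw' hw hne)
  · rintro ⟨w, hw, huniq⟩
    refine ⟨(qsem_ex I F .top x).2 ⟨w, hw, trivial⟩, ?_⟩
    rintro ⟨f, hinj, hf⟩
    have h0 := huniq (f 0) (by simpa using (hf 0).1)
    have h1 := huniq (f 1) (by simpa using (hf 1).1)
    exact absurd (hinj (h0.trans h1.symm)) (by decide)

theorem chi_elim {Cn Rn : Type} [Fintype Rn] [DecidableEq Rn] (I : Interp (TCn Cn Rn) ℕ)
    {R S : Rn} {x : I.Dom} (hR : x ∈ qsem I (chi R)) (hS : x ∈ qsem I (chi S)) : R = S := by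
  by_contra hne
  simp only [chi, qsem, Set.mem_inter_iff] at hR hS
  have h2 := (qsem_bigAnd I _ x).1 hR.2 (.neg (lR S)) ?_
  · exact h2 hS.1
  · exact List.mem_map.2 ⟨S, by simp [Finset.mem_toList, Finset.mem_erase, Ne.symm hne], rfl⟩

theorem mem_applyString {A : Type*} (n : ℕ) (π : List PS) (S : Set (Fin (n + 2) → A))
    (g : Fin (n + 2) → A) :
    g ∈ applyString n π S ↔ g ∘ ⇑(permOfString n π)⁻¹ ∈ S := by
  have key : ∀ (π : List PS) (S : Set (Fin (n + 2) → A)),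
      applyString n π S = (fun t => t ∘ ⇑(permOfString n π)) '' S := by
    intro π
    induction π with
    | nil =>
      intro S
      simp only [applyString, permOfString]
      ext t; simp [Set.mem_image]
    | cons o rest ih =>
      intro S
      simp only [applyString, applyOp, ih, permOfString, ← Set.image_comp]
      congr 1
  rw [key]
  constructor
  · rintro ⟨t, ht, rfl⟩
    convert ht using 1
    ext j
    simp
  · intro h
    exact ⟨g ∘ ⇑(permOfString n π)⁻¹, h, by ext j; simp⟩

theorem forall_perm_succ {n : ℕ} {α : Type*} (σ : Equiv.Perm (Fin (n + 2)))
    (qs : Fin (n + 1) → α → Prop) (c : Fin (n + 2) → α) :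
    (∀ j, j ≠ σ 0 → ∀ i, σ i.succ = j → qs i (c j)) ↔ (∀ i, qs i (c (σ i.succ))) := by
  constructor
  · intro h i
    exact h _ (fun e => Fin.succ_ne_zero i (σ.injective e)) i rfl
  · intro h j _ i e
    exact e ▸ h i

theorem exists_inj_iff_of_equiv {α β : Type*} (e : α ≃ β) (p : α → Prop) (q : β → Prop)
    (hpq : ∀ a, p a ↔ q (e a)) (k : ℕ) :
    (∃ f : Fin k → α, Function.Injective f ∧ ∀ m, p (f m)) ↔
      (∃ g : Fin k → β, Function.Injective g ∧ ∀ m, q (g m)) := by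
  constructor
  · rintro ⟨f, hinj, hf⟩
    exact ⟨fun m => e (f m), fun a b hab => hinj (e.injective hab),
      fun m => (hpq (f m)).1 (hf m)⟩
  · rintro ⟨g, hinj, hg⟩
    refine ⟨fun m => e.symm (g m), fun a b hab => hinj (e.symm.injective hab), fun m => ?_⟩
    rw [hpq]
    simpa using hg m


/-! ### The unraveled polyadic interpretation -/

section Unravel

variable {Cn Rn : Type} [Fintype Rn] [DecidableEq Rn]
variable (I : Interp (TCn Cn Rn) ℕ) (u₀ : I.Dom) (ar : Rn → ℕ)

open Classical in
/-- The unique successor of a lantern along feature `i` (junk value otherwise). -/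
noncomputable def succF (l : I.Dom) (i : ℕ) : I.Dom :=
  if h : ∃ w, (l, w) ∈ I.rInt i then h.choose else u₀

/-- `l` is a lantern of type `R`. -/
def Lant (R : Rn) (l : I.Dom) : Prop :=
  l ∉ qsem I (cdom (Cn := Cn) (Rn := Rn)) ∧ l ∈ qsem I (chi R) ∧
    l ∈ qsem I (outdeg (ar R + 2))

theorem Lant.uniqueSucc {R : Rn} {l : I.Dom} (h : Lant I ar R l) {i : ℕ} (hi : i < ar R + 2) :
    ∃! w, (l, w) ∈ I.rInt i := by
  have := (qsem_bigAnd I _ l).1 h.2.2 (.inter (eqOneTop i) (allI i cdom))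
    (List.mem_map.2 ⟨i, List.mem_range.2 hi, rfl⟩)
  exact (qsem_eqOneTop I i l).1 this.1

theorem Lant.roleEq {R S : Rn} {l : I.Dom} (h : Lant I ar R l) (h' : Lant I ar S l) : R = S :=
  chi_elim I h.2.1 h'.2.1

theorem succF_mem {R : Rn} {l : I.Dom} (h : Lant I ar R l) {i : ℕ} (hi : i < ar R + 2) :
    (l, succF I u₀ l i) ∈ I.rInt i := by
  obtain ⟨w, hw, -⟩ := h.uniqueSucc I ar hi
  have hex : ∃ w, (l, w) ∈ I.rInt i := ⟨w, hw⟩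
  rw [succF, dif_pos hex]
  exact hex.choose_spec

theorem succF_eq {R : Rn} {l : I.Dom} (h : Lant I ar R l) {i : ℕ} (hi : i < ar R + 2)
    {w : I.Dom} (hw : (l, w) ∈ I.rInt i) : w = succF I u₀ l i := by
  obtain ⟨w', -, huniq⟩ := h.uniqueSucc I ar hi
  rw [huniq w hw, huniq _ (succF_mem I u₀ ar h hi)]

/-- The element of `I` represented by a node of the unraveling. -/
noncomputable def el : List (I.Dom × ℕ × ℕ) → I.Dom
  | [] => u₀
  | (l, _, i) :: _ => succF I u₀ l i

/-- A step `(l, r, i)` is allowed from node `p` unless it goes back to `p`'s parent tuple. -/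
def noBack (l : I.Dom) (r : ℕ) : List (I.Dom × ℕ × ℕ) → Prop
  | [] => True
  | (l₀, _, i₀) :: _ => l ≠ l₀ ∨ r ≠ i₀

/-- Valid paths of the unraveling: a step `(l, r, i)` from `p` says: `p` sits at
coordinate `r` of the tuple reified by lantern `l`, and the new node is the
coordinate-`i` element of that tuple. -/
def Valid : List (I.Dom × ℕ × ℕ) → Prop
  | [] => True
  | (l, r, i) :: p => Valid p ∧ (∃ R, Lant I ar R l ∧ r < ar R + 2 ∧ i < ar R + 2) ∧
      i ≠ r ∧ (l, el I u₀ p) ∈ I.rInt r ∧ noBack I l r p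

/-- Nodes of the unraveling. -/
abbrev Node : Type := {p : List (I.Dom × ℕ × ℕ) // Valid I u₀ ar p}

theorem valid_cons {l : I.Dom} {r i : ℕ} {p : List (I.Dom × ℕ × ℕ)} :
    Valid I u₀ ar ((l, r, i) :: p) ↔ Valid I u₀ ar p ∧
      (∃ R, Lant I ar R l ∧ r < ar R + 2 ∧ i < ar R + 2) ∧ i ≠ r ∧
      (l, el I u₀ p) ∈ I.rInt r ∧ noBack I l r p := Iff.rfl

theorem noBack_cons {l : I.Dom} {r : ℕ} {l₀ : I.Dom} {r₀ i₀ : ℕ} {p : List (I.Dom × ℕ × ℕ)} :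
    noBack I l r ((l₀, r₀, i₀) :: p) ↔ (l ≠ l₀ ∨ r ≠ i₀) := Iff.rfl

theorem el_cons {l : I.Dom} {r i : ℕ} {p : List (I.Dom × ℕ × ℕ)} :
    el I u₀ ((l, r, i) :: p) = succF I u₀ l i := rfl

/-- The polyadic role interpretation of the unraveling. -/
def rIntJ (R : Rn) : Set (Fin (ar R + 2) → Node I u₀ ar) :=
  { g | ∃ (l : I.Dom) (r : Fin (ar R + 2)), Lant I ar R l ∧
      (l, el I u₀ (g r).1) ∈ I.rInt r.val ∧
      ∀ j, j ≠ r → (g j).1 = (l, r.val, j.val) :: (g r).1 }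

/-- The unraveled polyadic interpretation. -/
noncomputable def unravel : PInterp Cn Rn ar where
  Dom := Node I u₀ ar
  cInt A := {x | el I u₀ x.1 ∈ I.cInt (.inl A)}
  rInt := rIntJ I u₀ ar

end Unravel


section Counting

variable {Cn Rn : Type} [Fintype Rn] [DecidableEq Rn]
variable (I : Interp (TCn Cn Rn) ℕ) (u₀ : I.Dom) (ar : Rn → ℕ)

theorem childValid {R : Rn} {l : I.Dom} {r j : Fin (ar R + 2)} (x : Node I u₀ ar)
    (hl : Lant I ar R l) (hr : (l, el I u₀ x.1) ∈ I.rInt r.val)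
    (hnb : noBack I l r.val x.1) (hj : j ≠ r) :
    Valid I u₀ ar ((l, r.val, j.val) :: x.1) :=
  ⟨x.2, ⟨R, hl, r.isLt, j.isLt⟩, fun e => hj (Fin.ext e), hr, hnb⟩

/-- The tuple of the instance reified by lantern `l`, with `x` at root coordinate `r`. -/
noncomputable def childT {R : Rn} (x : Node I u₀ ar) (l : I.Dom) (r : Fin (ar R + 2))
    (hl : Lant I ar R l) (hr : (l, el I u₀ x.1) ∈ I.rInt r.val)
    (hnb : noBack I l r.val x.1) : Fin (ar R + 2) → Node I u₀ ar :=
  fun j => if h : j = r then x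
    else ⟨(l, r.val, j.val) :: x.1, childValid I u₀ ar x hl hr hnb h⟩

theorem childT_self {R : Rn} (x : Node I u₀ ar) (l : I.Dom) (r : Fin (ar R + 2))
    (hl : Lant I ar R l) (hr : (l, el I u₀ x.1) ∈ I.rInt r.val)
    (hnb : noBack I l r.val x.1) : childT I u₀ ar x l r hl hr hnb r = x :=
  dif_pos rfl

theorem childT_ne {R : Rn} (x : Node I u₀ ar) (l : I.Dom) (r : Fin (ar R + 2))
    (hl : Lant I ar R l) (hr : (l, el I u₀ x.1) ∈ I.rInt r.val)
    (hnb : noBack I l r.val x.1) {j : Fin (ar R + 2)} (hj : j ≠ r) :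
    (childT I u₀ ar x l r hl hr hnb j).1 = (l, r.val, j.val) :: x.1 := by
  rw [childT, dif_neg hj]

theorem childT_mem {R : Rn} (x : Node I u₀ ar) (l : I.Dom) (r : Fin (ar R + 2))
    (hl : Lant I ar R l) (hr : (l, el I u₀ x.1) ∈ I.rInt r.val)
    (hnb : noBack I l r.val x.1) :
    childT I u₀ ar x l r hl hr hnb ∈ rIntJ I u₀ ar R := by
  refine ⟨l, r, hl, ?_, ?_⟩
  · rw [childT_self]; exact hr
  · intro j hj
    rw [childT_self, childT_ne I u₀ ar x l r hl hr hnb hj]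

theorem childT_el {R : Rn} (x : Node I u₀ ar) (l : I.Dom) (r : Fin (ar R + 2))
    (hl : Lant I ar R l) (hr : (l, el I u₀ x.1) ∈ I.rInt r.val)
    (hnb : noBack I l r.val x.1) {j : Fin (ar R + 2)} (hj : j ≠ r) :
    el I u₀ (childT I u₀ ar x l r hl hr hnb j).1 = succF I u₀ l j.val := by
  rw [childT_ne I u₀ ar x l r hl hr hnb hj]
  rfl


/-- The key counting lemma: tuples of `rIntJ R` having `x` at root coordinate `r`
(and whose other coordinates satisfy `P`) correspond bijectively to lanterns of
type `R` that are `F_r`-predecessors of `el x` (with matching side conditions). -/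
theorem count_equiv (R : Rn) (x : Node I u₀ ar) (r : Fin (ar R + 2))
    (P : Fin (ar R + 2) → I.Dom → Prop) (k : ℕ) :
    (∃ f : Fin k → I.Dom, Function.Injective f ∧ ∀ m, Lant I ar R (f m) ∧
        (f m, el I u₀ x.1) ∈ I.rInt r.val ∧
        ∀ j, j ≠ r → P j (succF I u₀ (f m) j.val)) ↔
    (∃ g : Fin k → (Fin (ar R + 2) → Node I u₀ ar), Function.Injective g ∧ ∀ m,
        g m ∈ rIntJ I u₀ ar R ∧ g m r = x ∧ ∀ j, j ≠ r → P j (el I u₀ (g m j).1)) := by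
  classical
  obtain ⟨j₀, hj₀⟩ : ∃ j : Fin (ar R + 2), j ≠ r := exists_ne r
  constructor
  · rintro ⟨f, hinj, hf⟩
    by_cases hPar : ∃ l₀ r₀ tail, x.1 = (l₀, r₀, r.val) :: tail ∧ Lant I ar R l₀
    · obtain ⟨l₀, r₀, tail, hxl, hLl₀⟩ := hPar
      have hvx := x.2
      rw [hxl, valid_cons] at hvx
      obtain ⟨hvt, ⟨R₀, hl₀', hr₀lt, -⟩, hir, hedge, hnb₀⟩ := hvx
      obtain rfl : R = R₀ := Lant.roleEq I ar hLl₀ hl₀'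
      have hrfr : (⟨r₀, hr₀lt⟩ : Fin (ar R + 2)) ≠ r := fun e => hir (congrArg Fin.val e).symm
      have hnbx : ∀ lv : I.Dom, lv ≠ l₀ → noBack I lv r.val x.1 := by
        intro lv hlv
        rw [hxl, noBack_cons]
        exact Or.inl hlv
      refine ⟨fun m => if h : f m = l₀
          then childT I u₀ ar ⟨tail, hvt⟩ l₀ ⟨r₀, hr₀lt⟩ hLl₀ hedge hnb₀
          else childT I u₀ ar x (f m) r (hf m).1 (hf m).2.1 (hnbx _ h), ?_, ?_⟩
      · intro m m' e
        by_cases h : f m = l₀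
        · by_cases h' : f m' = l₀
          · exact hinj (h.trans h'.symm)
          · exfalso
            simp only [dif_pos h, dif_neg h'] at e
            have e1 := congrArg Subtype.val (congrFun e ⟨r₀, hr₀lt⟩)
            rw [childT_self I u₀ ar ⟨tail, hvt⟩ l₀ ⟨r₀, hr₀lt⟩ hLl₀ hedge hnb₀,
              childT_ne I u₀ ar x (f m') r (hf m').1 (hf m').2.1 (hnbx _ h') hrfr] at e1
            have e2 := congrArg List.length e1
            rw [hxl] at e2
            simp only [List.length_cons] at e2
            omega
        · by_cases h' : f m' = l₀
          · exfalso
            simp only [dif_neg h, dif_pos h'] at e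
            have e1 := congrArg Subtype.val (congrFun e.symm ⟨r₀, hr₀lt⟩)
            rw [childT_self I u₀ ar ⟨tail, hvt⟩ l₀ ⟨r₀, hr₀lt⟩ hLl₀ hedge hnb₀,
              childT_ne I u₀ ar x (f m) r (hf m).1 (hf m).2.1 (hnbx _ h) hrfr] at e1
            have e2 := congrArg List.length e1
            rw [hxl] at e2
            simp only [List.length_cons] at e2
            omega
          · apply hinj
            simp only [dif_neg h, dif_neg h'] at e
            have e1 := congrArg Subtype.val (congrFun e j₀)
            rw [childT_ne I u₀ ar x (f m) r (hf m).1 (hf m).2.1 (hnbx _ h) hj₀,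
              childT_ne I u₀ ar x (f m') r (hf m').1 (hf m').2.1 (hnbx _ h') hj₀] at e1
            simp only [List.cons.injEq, Prod.mk.injEq] at e1
            exact e1.1.1
      · intro m
        by_cases h : f m = l₀
        · simp only [dif_pos h]
          refine ⟨childT_mem I u₀ ar ⟨tail, hvt⟩ l₀ ⟨r₀, hr₀lt⟩ hLl₀ hedge hnb₀, ?_, ?_⟩
          · apply Subtype.ext
            rw [childT_ne I u₀ ar ⟨tail, hvt⟩ l₀ ⟨r₀, hr₀lt⟩ hLl₀ hedge hnb₀ (Ne.symm hrfr),
              hxl]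
          · intro j hj
            by_cases hjrf : j = ⟨r₀, hr₀lt⟩
            · rw [hjrf, childT_self I u₀ ar ⟨tail, hvt⟩ l₀ ⟨r₀, hr₀lt⟩ hLl₀ hedge hnb₀]
              have hsucc : el I u₀ tail = succF I u₀ l₀ r₀ := succF_eq I u₀ ar hLl₀ hr₀lt hedge
              have hpm := (hf m).2.2 ⟨r₀, hr₀lt⟩ hrfr
              rw [h] at hpm
              show P _ (el I u₀ tail)
              rw [hsucc]
              exact hpm
            · rw [childT_el I u₀ ar ⟨tail, hvt⟩ l₀ ⟨r₀, hr₀lt⟩ hLl₀ hedge hnb₀ hjrf]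
              have hpm := (hf m).2.2 j hj
              rwa [h] at hpm
        · simp only [dif_neg h]
          refine ⟨childT_mem I u₀ ar x (f m) r (hf m).1 (hf m).2.1 (hnbx _ h),
            childT_self I u₀ ar x (f m) r (hf m).1 (hf m).2.1 (hnbx _ h), fun j hj => ?_⟩
          rw [childT_el I u₀ ar x (f m) r (hf m).1 (hf m).2.1 (hnbx _ h) hj]
          exact (hf m).2.2 j hj
    · have hnbx : ∀ m, noBack I (f m) r.val x.1 := by
        intro m
        rcases hxe : x.1 with - | ⟨⟨l₀, r₀, i₀⟩, tail⟩
        · trivial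
        · rw [noBack_cons]
          by_contra hcon
          push_neg at hcon
          refine hPar ⟨l₀, r₀, tail, ?_, ?_⟩
          · rw [hxe, hcon.2]
          · rw [← hcon.1]; exact (hf m).1
      refine ⟨fun m => childT I u₀ ar x (f m) r (hf m).1 (hf m).2.1 (hnbx m), ?_, fun m =>
        ⟨childT_mem I u₀ ar x (f m) r (hf m).1 (hf m).2.1 (hnbx m),
         childT_self I u₀ ar x (f m) r (hf m).1 (hf m).2.1 (hnbx m), fun j hj => ?_⟩⟩
      · intro m m' e
        apply hinj
        have e1 := congrArg Subtype.val (congrFun e j₀)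
        rw [childT_ne I u₀ ar x (f m) r (hf m).1 (hf m).2.1 (hnbx m) hj₀,
          childT_ne I u₀ ar x (f m') r (hf m').1 (hf m').2.1 (hnbx m') hj₀] at e1
        simp only [List.cons.injEq, Prod.mk.injEq] at e1
        exact e1.1.1
      · rw [childT_el I u₀ ar x (f m) r (hf m).1 (hf m).2.1 (hnbx m) hj]
        exact (hf m).2.2 j hj
  · rintro ⟨g, hinj, hg⟩
    have hmem : ∀ m, ∃ (l : I.Dom) (rr : Fin (ar R + 2)), Lant I ar R l ∧
        (l, el I u₀ (g m rr).1) ∈ I.rInt rr.val ∧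
        ∀ j, j ≠ rr → (g m j).1 = (l, rr.val, j.val) :: (g m rr).1 := fun m => (hg m).1
    choose l rr hl hedge heq using hmem
    have hgr : ∀ m, g m r = x := fun m => (hg m).2.1
    have hP : ∀ m, (l m, el I u₀ x.1) ∈ I.rInt r.val ∧
        ∀ j, j ≠ r → P j (succF I u₀ (l m) j.val) := by
      intro m
      by_cases hc : rr m = r
      · constructor
        · have h1 := hedge m
          rwa [hc, hgr m] at h1
        · intro j hj
          have hshape : (g m j).1 = (l m, r.val, j.val) :: x.1 := by
            have h1 := heq m j (by rw [hc]; exact hj)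
            rwa [hc, hgr m] at h1
          have h1 := (hg m).2.2 j hj
          rw [hshape, el_cons] at h1
          exact h1
      · have hx1 : x.1 = (l m, (rr m).val, r.val) :: (g m (rr m)).1 := by
          rw [← hgr m]
          exact heq m r (Ne.symm hc)
        constructor
        · have hgoal : el I u₀ x.1 = succF I u₀ (l m) r.val := by rw [hx1, el_cons]
          rw [hgoal]
          exact succF_mem I u₀ ar (hl m) r.isLt
        · intro j hj
          by_cases hjm : j = rr m
          · rw [hjm]
            have h1 := (hg m).2.2 (rr m) hc
            have h2 : el I u₀ (g m (rr m)).1 = succF I u₀ (l m) (rr m).val :=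
              succF_eq I u₀ ar (hl m) (rr m).isLt (hedge m)
            rwa [h2] at h1
          · have h1 := (hg m).2.2 j hj
            rw [heq m j hjm, el_cons] at h1
            exact h1
    refine ⟨l, ?_, fun m => ⟨hl m, (hP m).1, (hP m).2⟩⟩
    intro m m' e
    apply hinj
    by_cases hc : rr m = r
    · by_cases hc' : rr m' = r
      · funext j
        by_cases hjr : j = r
        · rw [hjr, hgr m, hgr m']
        · apply Subtype.ext
          have s1 := heq m j (by rw [hc]; exact hjr)
          have s2 := heq m' j (by rw [hc']; exact hjr)
          rw [s1, s2, hc, hc', hgr m, hgr m', e]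
      · exfalso
        have hx1 : x.1 = (l m', (rr m').val, r.val) :: (g m' (rr m')).1 := by
          rw [← hgr m']
          exact heq m' r (Ne.symm hc')
        have hshape : (g m j₀).1 = (l m, r.val, j₀.val) :: x.1 := by
          have h1 := heq m j₀ (by rw [hc]; exact hj₀)
          rwa [hc, hgr m] at h1
        have hval := (g m j₀).2
        rw [hshape, valid_cons] at hval
        obtain ⟨-, -, -, -, hnb⟩ := hval
        rw [hx1, noBack_cons] at hnb
        rcases hnb with hh | hh
        · exact hh e
        · exact hh rfl
    · by_cases hc' : rr m' = r
      · exfalso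
        have hx1 : x.1 = (l m, (rr m).val, r.val) :: (g m (rr m)).1 := by
          rw [← hgr m]
          exact heq m r (Ne.symm hc)
        have hshape : (g m' j₀).1 = (l m', r.val, j₀.val) :: x.1 := by
          have h1 := heq m' j₀ (by rw [hc']; exact hj₀)
          rwa [hc', hgr m'] at h1
        have hval := (g m' j₀).2
        rw [hshape, valid_cons] at hval
        obtain ⟨-, -, -, -, hnb⟩ := hval
        rw [hx1, noBack_cons] at hnb
        rcases hnb with hh | hh
        · exact hh e.symm
        · exact hh rfl
      · have hx1 : x.1 = (l m, (rr m).val, r.val) :: (g m (rr m)).1 := by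
          rw [← hgr m]
          exact heq m r (Ne.symm hc)
        have hx1' : x.1 = (l m', (rr m').val, r.val) :: (g m' (rr m')).1 := by
          rw [← hgr m']
          exact heq m' r (Ne.symm hc')
        have hh := hx1.symm.trans hx1'
        simp only [List.cons.injEq, Prod.mk.injEq] at hh
        obtain ⟨⟨-, hrr, -⟩, htl⟩ := hh
        have hrr' : rr m = rr m' := Fin.ext hrr
        rw [hrr'] at htl
        funext j
        by_cases hjm : j = rr m'
        · rw [hjm]
          exact Subtype.ext htl
        · apply Subtype.ext
          rw [heq m j (by rw [hrr']; exact hjm), heq m' j hjm, e, hrr', htl]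

end Counting


section Main

variable {Cn Rn : Type} [Fintype Rn] [DecidableEq Rn]
variable (I : Interp (TCn Cn Rn) ℕ) (u₀ : I.Dom) (ar : Rn → ℕ)

theorem qsem_big (R : Rn) (π : List PS) (cs : Fin (ar R + 1) → ALCQP Cn Rn ar) (lv : I.Dom) :
    lv ∈ qsem I (bigAnd ((.neg cdom) :: chi R :: outdeg (ar R + 2) ::
        List.ofFn fun i : Fin (ar R + 1) =>
          exI ((permOfString (ar R) π i.succ : Fin (ar R + 2)).val) (reify (cs i)))) ↔
      (Lant I ar R lv ∧ ∀ i : Fin (ar R + 1),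
        succF I u₀ lv (permOfString (ar R) π i.succ : Fin (ar R + 2)).val ∈
          qsem I (reify (cs i))) := by
  rw [qsem_bigAnd]
  simp only [List.forall_mem_cons, List.forall_mem_ofFn_iff]
  constructor
  · rintro ⟨h1, h2, h3, h4⟩
    have hL : Lant I ar R lv := ⟨h1, h2, h3⟩
    refine ⟨hL, fun i => ?_⟩
    obtain ⟨w, hw, hq⟩ := (qsem_exI I _ _ lv).1 (h4 i)
    rwa [← succF_eq I u₀ ar hL (Fin.is_lt _) hw]
  · rintro ⟨hL, h4⟩
    exact ⟨hL.1, hL.2.1, hL.2.2, fun i => (qsem_exI I _ _ lv).2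
      ⟨succF I u₀ lv (permOfString (ar R) π i.succ : Fin (ar R + 2)).val,
        succF_mem I u₀ ar hL (Fin.is_lt _), h4 i⟩⟩

theorem unravel_correct (D : ALCQP Cn Rn ar) (x : Node I u₀ ar) :
    x ∈ qpsem (unravel I u₀ ar) D ↔ el I u₀ x.1 ∈ qsem I (reify D) := by
  induction D generalizing x with
  | top => simp [qpsem, qsem, reify]; trivial
  | bot => simp [qpsem, qsem, reify]; exact fun h => h
  | atom A => exact Iff.rfl
  | neg C ih =>
    simp only [reify, qpsem, qsem, Set.mem_compl_iff]
    exact not_congr (ih x)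
  | inter C D ihC ihD =>
    simp only [reify, qpsem, qsem, Set.mem_inter_iff]
    exact and_congr (ihC x) (ihD x)
  | atLeast k R π cs ih =>
    have step1 : x ∈ qpsem (unravel I u₀ ar) (.atLeast k R π cs) ↔
        (∃ g : Fin k → (Fin (ar R + 2) → Node I u₀ ar), Function.Injective g ∧ ∀ m,
          g m ∈ rIntJ I u₀ ar R ∧ g m (permOfString (ar R) π 0) = x ∧
          ∀ j, j ≠ permOfString (ar R) π 0 → ∀ i : Fin (ar R + 1),
            permOfString (ar R) π i.succ = j →
              el I u₀ (g m j).1 ∈ qsem I (reify (cs i))) := by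
      have hshow : x ∈ qpsem (unravel I u₀ ar) (.atLeast k R π cs) ↔
          (∃ f : Fin k → (Fin (ar R + 2) → Node I u₀ ar), Function.Injective f ∧ ∀ m,
            f m ∈ applyString (ar R) π (rIntJ I u₀ ar R) ∧ f m 0 = x ∧
            ∀ i : Fin (ar R + 1), f m i.succ ∈ qpsem (unravel I u₀ ar) (cs i)) := Iff.rfl
      rw [hshow]
      refine exists_inj_iff_of_equiv
        ((Equiv.arrowCongr (permOfString (ar R) π) (Equiv.refl (Node I u₀ ar))) :
          (Fin (ar R + 2) → Node I u₀ ar) ≃ (Fin (ar R + 2) → Node I u₀ ar))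
        (fun t => t ∈ applyString (ar R) π (rIntJ I u₀ ar R) ∧ t 0 = x ∧
          ∀ i : Fin (ar R + 1), t i.succ ∈ qpsem (unravel I u₀ ar) (cs i))
        (fun s => s ∈ rIntJ I u₀ ar R ∧ s (permOfString (ar R) π 0) = x ∧
          ∀ j, j ≠ permOfString (ar R) π 0 → ∀ i : Fin (ar R + 1),
            permOfString (ar R) π i.succ = j →
              el I u₀ (s j).1 ∈ qsem I (reify (cs i)))
        (fun t => ?_) k
      have hfun : (Equiv.arrowCongr (permOfString (ar R) π) (Equiv.refl (Node I u₀ ar))) t =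
          t ∘ ⇑(permOfString (ar R) π)⁻¹ := by
        funext j
        simp [Equiv.arrowCongr_apply, Equiv.Perm.inv_def]
      have hc : ∀ i : Fin (ar R + 1),
          (Equiv.arrowCongr (permOfString (ar R) π) (Equiv.refl (Node I u₀ ar))) t
            (permOfString (ar R) π i.succ) = t i.succ := by
        intro i; simp
      have hc0 : (Equiv.arrowCongr (permOfString (ar R) π) (Equiv.refl (Node I u₀ ar))) t
          (permOfString (ar R) π 0) = t 0 := by simp
      constructor
      · rintro ⟨h1, h2, h3⟩
        refine ⟨?_, ?_, ?_⟩
        · rw [hfun]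
          exact (mem_applyString (ar R) π _ t).1 h1
        · rw [hc0]; exact h2
        · rintro j hj i rfl
          rw [hc i]
          exact (ih i (t i.succ)).1 (h3 i)
      · rintro ⟨h1, h2, h3⟩
        refine ⟨?_, ?_, fun i => (ih i (t i.succ)).2 ?_⟩
        · rw [hfun] at h1
          exact (mem_applyString (ar R) π _ t).2 h1
        · rw [hc0] at h2; exact h2
        · have := h3 (permOfString (ar R) π i.succ)
            (fun ee => Fin.succ_ne_zero i ((permOfString (ar R) π).injective ee)) i rfl
          rwa [hc i] at this
    have step3 : (∃ f : Fin k → I.Dom, Function.Injective f ∧ ∀ m,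
        Lant I ar R (f m) ∧
        (f m, el I u₀ x.1) ∈ I.rInt (permOfString (ar R) π 0 : Fin (ar R + 2)).val ∧
        ∀ j, j ≠ permOfString (ar R) π 0 → ∀ i : Fin (ar R + 1),
          permOfString (ar R) π i.succ = j →
            succF I u₀ (f m) j.val ∈ qsem I (reify (cs i))) ↔
        el I u₀ x.1 ∈ qsem I (reify (.atLeast k R π cs)) := by
      have hshow : el I u₀ x.1 ∈ qsem I (reify (.atLeast k R π cs)) ↔
          (∃ f : Fin k → I.Dom, Function.Injective f ∧ ∀ m,
            (f m, el I u₀ x.1) ∈ I.rInt (permOfString (ar R) π 0 : Fin (ar R + 2)).val ∧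
            f m ∈ qsem I (bigAnd ((.neg cdom) :: chi R :: outdeg (ar R + 2) ::
              List.ofFn fun i : Fin (ar R + 1) =>
                exI ((permOfString (ar R) π i.succ : Fin (ar R + 2)).val)
                  (reify (cs i))))) := Iff.rfl
      rw [hshow]
      refine exists_inj_iff_of_equiv (Equiv.refl I.Dom)
        (fun lv => Lant I ar R lv ∧
          (lv, el I u₀ x.1) ∈ I.rInt (permOfString (ar R) π 0 : Fin (ar R + 2)).val ∧
          ∀ j, j ≠ permOfString (ar R) π 0 → ∀ i : Fin (ar R + 1),
            permOfString (ar R) π i.succ = j →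
              succF I u₀ lv j.val ∈ qsem I (reify (cs i)))
        (fun lv => (lv, el I u₀ x.1) ∈ I.rInt (permOfString (ar R) π 0 : Fin (ar R + 2)).val ∧
          lv ∈ qsem I (bigAnd ((.neg cdom) :: chi R :: outdeg (ar R + 2) ::
            List.ofFn fun i : Fin (ar R + 1) =>
              exI ((permOfString (ar R) π i.succ : Fin (ar R + 2)).val) (reify (cs i)))))
        (fun lv => ?_) k
      constructor
      · rintro ⟨hL, he, hs⟩
        refine ⟨he, (qsem_big I u₀ ar R π cs lv).2 ⟨hL, fun i => ?_⟩⟩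
        exact hs (permOfString (ar R) π i.succ)
          (fun ee => Fin.succ_ne_zero i ((permOfString (ar R) π).injective ee)) i rfl
      · rintro ⟨he, hB⟩
        obtain ⟨hL, hsi⟩ := (qsem_big I u₀ ar R π cs lv).1 hB
        refine ⟨hL, he, ?_⟩
        rintro j hj i rfl
        exact hsi i
    exact step1.trans ((count_equiv I u₀ ar R x (permOfString (ar R) π 0)
      (fun j v => ∀ i : Fin (ar R + 1), permOfString (ar R) π i.succ = j →
        v ∈ qsem I (reify (cs i))) k).symm.trans step3)

end Main

/-- If the ALCQI concept `C_dom ⊓ 𝕋(C)` is satisfiable, then the ALCQP(p,s)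
concept `C` is satisfiable. -/
theorem satQI_implies_satQP {Cn Rn : Type} [Fintype Rn] [DecidableEq Rn] {ar : Rn → ℕ}
    (C : ALCQP Cn Rn ar) (h : satQI (.inter cdom (reify C))) :
    satQP C := by
  obtain ⟨I, u₀, hu⟩ := h
  refine ⟨unravel I u₀ ar, ⟨[], True.intro⟩, ?_⟩
  exact (unravel_correct I u₀ ar C ⟨[], True.intro⟩).2 hu.2
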